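/- arXiv:0705.2546 — 3 statements merged into one kernel-verified Lean document; each statement's English description precedes it below -/
import Mathlib

section
/- Let Y be a metric space, let X ⊆ Y carry the restricted metric, and let 𝒰 be an (r,d)-cover of X. Then the closed neighborhood N_{r/4}(X) = {y ∈ Y : d(y, X) ≤ r/4}, with the metric restricted from Y, admits an (r/4, d+r)-cover 𝒰̃ with ord 𝒰̃ ≤ ord 𝒰. -/
/-- `CoverOrdLE 𝒰 m` : the order of the family `𝒰` (the maximal number of
members of `𝒰` having a common point) is at most `m`. -/
def CoverOrdLE {Y : Type*} (𝒰 : Set (Set Y)) (m : ℕ) : Prop :=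
  ∀ T : Finset (Set Y), ↑T ⊆ 𝒰 → (⋂₀ (T : Set (Set Y))).Nonempty → T.card ≤ m

/-- `IsRDCoverOn A r d 𝒰` : `𝒰` is an `(r,d)`-cover of the subset `A` of the
metric space `Y`: a cover of `A` by subsets of `A` of diameter at most `d`
whose Lebesgue number `L(𝒰) = inf_{x ∈ A} sup_{U ∈ 𝒰} d(x, A ∖ U)` is greater
than `r` (the infimum and supremum are computed in `ℝ≥0∞`, so that
`d(x, ∅) = ∞`). -/
def IsRDCoverOn {Y : Type*} [MetricSpace Y] (A : Set Y) (r d : ℝ)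
    (𝒰 : Set (Set Y)) : Prop :=
  (∀ U ∈ 𝒰, U ⊆ A) ∧ (A ⊆ ⋃₀ 𝒰) ∧
  (∀ U ∈ 𝒰, ∀ x ∈ U, ∀ y ∈ U, dist x y ≤ d) ∧
  ENNReal.ofReal r < ⨅ x ∈ A, ⨆ U ∈ 𝒰, EMetric.infEdist x (A \ U)

open Metric EMetric Set
/-- **Proposition 1.2.** Let `X ⊆ Y` carry the restricted metric and let `𝒰`
be an `(r,d)`-cover of `X`.  Then the closed neighborhood
`N_{r/4}(X) = {y ∈ Y : d(y, X) ≤ r/4}` admits an `(r/4, d + r)`-cover `𝒰̃`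
with `ord 𝒰̃ ≤ ord 𝒰`. -/
theorem rd_cover_of_neighborhood {Y : Type*} [MetricSpace Y] (X : Set Y)
    (r d : ℝ) (hr : 0 < r) (𝒰 : Set (Set Y)) (h𝒰 : IsRDCoverOn X r d 𝒰) :
    ∃ 𝒱 : Set (Set Y),
      IsRDCoverOn (Metric.cthickening (r / 4) X) (r / 4) (d + r) 𝒱 ∧
      ∀ m : ℕ, CoverOrdLE 𝒰 m → CoverOrdLE 𝒱 m := by
  classical
  obtain ⟨hsub, hcov, hdiam, hL⟩ := h𝒰
  set N := Metric.cthickening (r / 4) X with hN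
  set f : Set Y → Set Y := fun U => {y | y ∈ N ∧ ∀ w ∈ X, dist w y < 3 * r / 8 → w ∈ U}
    with hf
  -- every point of N has a point of X within 3r/8
  have hnear : ∀ y ∈ N, ∃ x ∈ X, dist y x < 3 * r / 8 := by
    intro y hy
    have h1 : EMetric.infEdist y X ≤ ENNReal.ofReal (r / 4) :=
      Metric.mem_cthickening_iff.mp hy
    have h2 : EMetric.infEdist y X < ENNReal.ofReal (3 * r / 8) :=
      lt_of_le_of_lt h1 (by
        apply ENNReal.ofReal_lt_ofReal_iff_of_nonneg (by linarith) |>.mpr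
        linarith)
    obtain ⟨x, hx, hxd⟩ := EMetric.infEdist_lt_iff.mp h2
    exact ⟨x, hx, edist_lt_ofReal.mp hxd⟩
  -- the key construction : every point of N has a point of X within 5r/16,
  -- and then a set U deep around that point
  have hkey : ∀ y ∈ N, ∃ U ∈ 𝒰, y ∈ f U ∧
      ENNReal.ofReal (5 * r / 16) ≤ EMetric.infEdist y (N \ f U) := by
    intro y hy
    have h1 : EMetric.infEdist y X ≤ ENNReal.ofReal (r / 4) :=
      Metric.mem_cthickening_iff.mp hy
    have h2 : EMetric.infEdist y X < ENNReal.ofReal (5 * r / 16) :=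
      lt_of_le_of_lt h1 (by
        apply ENNReal.ofReal_lt_ofReal_iff_of_nonneg (by linarith) |>.mpr
        linarith)
    obtain ⟨x, hx, hxd'⟩ := EMetric.infEdist_lt_iff.mp h2
    have hxd : edist x y < ENNReal.ofReal (5 * r / 16) := by rwa [edist_comm]
    -- Lebesgue number of 𝒰 at x
    have h3 : ENNReal.ofReal r < ⨆ U ∈ 𝒰, EMetric.infEdist x (X \ U) :=
      lt_of_lt_of_le hL (iInf₂_le x hx)
    obtain ⟨U, hU3⟩ := lt_iSup_iff.mp h3
    obtain ⟨hU, hU4⟩ := lt_iSup_iff.mp hU3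
    refine ⟨U, hU, ?_, ?_⟩
    · -- y ∈ f U
      refine ⟨hy, fun w hw hwd => ?_⟩
      by_contra hwU
      have hxw : ENNReal.ofReal r < edist x w :=
        lt_of_lt_of_le hU4 (EMetric.infEdist_le_edist_of_mem ⟨hw, hwU⟩)
      have hchain : edist x w ≤ edist x y + edist y w := edist_triangle x y w
      have hyw : edist y w < ENNReal.ofReal (3 * r / 8) := by
        rw [edist_comm]; exact edist_lt_ofReal.mpr hwd
      have : edist x w < ENNReal.ofReal (5 * r / 16) + ENNReal.ofReal (3 * r / 8) :=
        lt_of_le_of_lt hchain (ENNReal.add_lt_add hxd hyw)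
      rw [← ENNReal.ofReal_add (by linarith) (by linarith)] at this
      have : edist x w < ENNReal.ofReal r :=
        lt_of_lt_of_le this (ENNReal.ofReal_le_ofReal (by linarith))
      exact absurd (this.trans hxw) (lt_irrefl _)
    · -- Lebesgue bound
      apply le_infEdist.mpr
      intro z hz
      obtain ⟨hzN, hzf⟩ := hz
      by_contra hlt
      push_neg at hlt
      -- z ∉ f U : there is w ∈ X with dist w z < 3r/8 and w ∉ U
      simp only [hf, Set.mem_setOf_eq, not_and, not_forall] at hzf
      obtain ⟨w, hw, hwd, hwU⟩ := hzf hzN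
      have hxw : ENNReal.ofReal r < edist x w :=
        lt_of_lt_of_le hU4 (EMetric.infEdist_le_edist_of_mem ⟨hw, hwU⟩)
      have hzw : edist z w < ENNReal.ofReal (3 * r / 8) := by
        rw [edist_comm]; exact edist_lt_ofReal.mpr hwd
      have hchain : edist x w ≤ edist x y + (edist y z + edist z w) := by
        calc edist x w ≤ edist x z + edist z w := edist_triangle x z w
        _ ≤ (edist x y + edist y z) + edist z w := by
            exact add_le_add_left (edist_triangle x y z) _
        _ = edist x y + (edist y z + edist z w) := by ring
      have hbig : edist x w <
          ENNReal.ofReal (5 * r / 16) +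
            (ENNReal.ofReal (5 * r / 16) + ENNReal.ofReal (3 * r / 8)) :=
        lt_of_le_of_lt hchain (ENNReal.add_lt_add hxd (ENNReal.add_lt_add hlt hzw))
      rw [← ENNReal.ofReal_add (by linarith) (by linarith),
        ← ENNReal.ofReal_add (by linarith) (by linarith)] at hbig
      have : edist x w < ENNReal.ofReal r :=
        lt_of_lt_of_le hbig (ENNReal.ofReal_le_ofReal (by linarith))
      exact absurd (this.trans hxw) (lt_irrefl _)
  refine ⟨f '' 𝒰, ⟨?_, ?_, ?_, ?_⟩, ?_⟩
  · -- subsets of N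
    rintro V ⟨U, hU, rfl⟩ y hy
    exact hy.1
  · -- cover
    intro y hy
    obtain ⟨U, hU, hyf, -⟩ := hkey y hy
    exact ⟨f U, ⟨U, hU, rfl⟩, hyf⟩
  · -- diameter
    rintro V ⟨U, hU, rfl⟩ y hy y' hy'
    obtain ⟨x, hx, hxd⟩ := hnear y hy.1
    obtain ⟨x', hx', hxd'⟩ := hnear y' hy'.1
    have hxU : x ∈ U := hy.2 x hx (by rwa [dist_comm])
    have hxU' : x' ∈ U := hy'.2 x' hx' (by rwa [dist_comm])
    have hxx : dist x x' ≤ d := hdiam U hU x hxU x' hxU'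
    calc dist y y' ≤ dist y x + dist x y' := dist_triangle y x y'
    _ ≤ dist y x + (dist x x' + dist x' y') := by
        exact add_le_add_right (dist_triangle x x' y') _
    _ = dist y x + dist x x' + dist x' y' := by ring
    _ ≤ 3 * r / 8 + d + 3 * r / 8 := by
        rw [dist_comm x' y']
        exact add_le_add (add_le_add hxd.le hxx) hxd'.le
    _ ≤ d + r := by linarith
  · -- Lebesgue number of the new cover
    have : ENNReal.ofReal (5 * r / 16) ≤
        ⨅ y ∈ N, ⨆ V ∈ f '' 𝒰, EMetric.infEdist y (N \ V) := by
      refine le_iInf₂ fun y hy => ?_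
      obtain ⟨U, hU, -, hbound⟩ := hkey y hy
      exact le_trans hbound (le_iSup₂ (f := fun V _ => EMetric.infEdist y (N \ V))
        (f U) ⟨U, hU, rfl⟩)
    refine lt_of_lt_of_le ?_ this
    apply ENNReal.ofReal_lt_ofReal_iff_of_nonneg (by linarith) |>.mpr
    linarith
  · -- order
    intro m hm T hT hTne
    rcases T.eq_empty_or_nonempty with rfl | ⟨V₀, hV₀⟩
    · simp
    obtain ⟨y, hy⟩ := hTne
    have hyN : y ∈ N := by
      obtain ⟨U₀, hU₀, rfl⟩ := hT hV₀
      exact (hy _ hV₀).1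
    obtain ⟨x, hx, hxd⟩ := hnear y hyN
    set c : Set Y → Set Y := fun V => if h : ∃ U ∈ 𝒰, f U = V then h.choose else ∅
      with hc
    have hcspec : ∀ V ∈ T, c V ∈ 𝒰 ∧ f (c V) = V := by
      intro V hV
      obtain ⟨U, hU, hUV⟩ := hT hV
      have h : ∃ U ∈ 𝒰, f U = V := ⟨U, hU, hUV⟩
      simp only [hc, dif_pos h]
      exact ⟨h.choose_spec.1, h.choose_spec.2⟩
    have hinj : Set.InjOn c ↑T := by
      intro V hV V' hV' hVV
      rw [← (hcspec V hV).2, ← (hcspec V' hV').2, hVV]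
    have hcard : (T.image c).card = T.card := Finset.card_image_of_injOn hinj
    have := hm (T.image c) (by
        intro U hU
        simp only [Finset.coe_image, Set.mem_image, Finset.mem_coe] at hU
        obtain ⟨V, hV, rfl⟩ := hU
        exact (hcspec V hV).1)
      (by
        refine ⟨x, ?_⟩
        intro U hU
        simp only [Finset.coe_image, Set.mem_image, Finset.mem_coe] at hU
        obtain ⟨V, hV, rfl⟩ := hU
        have hyV : y ∈ V := hy V hV
        rw [← (hcspec V hV).2] at hyV
        exact hyV.2 x hx (by rwa [dist_comm]))
    omega
end

section
/- Let γ ∈ A *_C B have normal presentation γ = z₁⋯z_k c with k ≥ 1. Then ‖γ‖ ≥ d(z_k c, C), where ‖·‖ is the word norm of A *_C B with respect to S_A ∪ S_B and d(z_k c, C) = inf{d(z_k c, c'') : c'' ∈ C}. This holds for every choice of the sections s_A and s_B. -/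
/-- The word norm of `g` with respect to the generating set `S`. -/
noncomputable def wordNorm {G : Type*} [Group G] (S : Set G) (g : G) : ℕ :=
  sInf {k : ℕ | ∃ l : List G, l.length = k ∧ (∀ x ∈ l, x ∈ S) ∧ l.prod = g}

/-- The word metric on `G` associated with the generating set `S`. -/
noncomputable def wordDist {G : Type*} [Group G] (S : Set G) (g h : G) : ℝ :=
  (wordNorm S (g⁻¹ * h) : ℝ)

/-- `G` is the amalgamated free product `A *_C B` of its subgroups `A` and `B`
over the common subgroup `C`: `A` and `B` generate `G`, and any pair of
homomorphisms on `A` and `B` agreeing on `C` extends to `G` (this universal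
property, together with the generation condition, characterizes `A *_C B`). -/
def IsAmalgamatedProduct (G : Type*) [Group G] (A B C : Subgroup G) : Prop :=
  C ≤ A ∧ C ≤ B ∧ Subgroup.closure ((A : Set G) ∪ (B : Set G)) = ⊤ ∧
  ∀ {H : Type*} [Group H] (fA : A →* H) (fB : B →* H),
    (∀ (x : G) (hxA : x ∈ A) (hxB : x ∈ B), x ∈ C → fA ⟨x, hxA⟩ = fB ⟨x, hxB⟩) →
    ∃ f : G →* H, (∀ a : A, f ↑a = fA a) ∧ (∀ b : B, f ↑b = fB b)

open Monoid

private lemma countable_of_submonoid_closure {M : Type*} [Monoid M] {s : Set M}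
    (hs : s.Countable) (h : ∀ x : M, x ∈ Submonoid.closure s) : Countable M := by
  haveI := hs.to_subtype
  have hsurj : Function.Surjective (fun l : List s => (l.map Subtype.val).prod) := by
    intro x
    obtain ⟨l, hl, hprod⟩ := Submonoid.exists_list_of_mem_closure (h x)
    refine ⟨l.pmap (fun y hy => (⟨y, hy⟩ : s)) hl, ?_⟩
    simp only [List.map_pmap]
    rw [List.pmap_eq_map]
    simpa using hprod
  exact hsurj.countable

/-- Britton's lemma for an amalgamated product, derived from the universal property. -/
private lemma alt_prod_not_mem.{u, v} {G : Type u} [Group G] {A B C : Subgroup G}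
    (hG : IsAmalgamatedProduct.{u, v} G A B C) (hcnt : Countable G)
    (L : List (Bool × G))
    (hmem : ∀ pr ∈ L, pr.2 ∈ (cond pr.1 A B : Subgroup G) ∧ pr.2 ∉ C)
    (hchain : (L.map Prod.fst).Chain' Ne) (hne : L ≠ []) :
    (L.map Prod.snd).prod ∉ C := by
  classical
  obtain ⟨hCA, hCB, hgen, huniv⟩ := hG
  -- set up the pushout
  have hle : ∀ b : Bool, C ≤ (cond b A B : Subgroup G) := by intro b; cases b <;> assumption
  set φ : ∀ b : Bool, C →* (cond b A B : Subgroup G) :=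
    fun b => Subgroup.inclusion (hle b) with hφdef
  have hφinj : ∀ b, Function.Injective (φ b) := fun b => Subgroup.inclusion_injective _
  -- countability of the pushout
  haveI : Countable (PushoutI φ) := by
    apply countable_of_submonoid_closure (s := Set.range (PushoutI.of (φ := φ) true) ∪
      Set.range (PushoutI.of (φ := φ) false) ∪ Set.range (PushoutI.base φ))
    · exact ((Set.countable_range _).union (Set.countable_range _)).union (Set.countable_range _)
    · intro x
      induction x using PushoutI.induction_on with
      | of i g =>
        apply Submonoid.subset_closure
        cases i
        · exact Or.inl (Or.inr ⟨g, rfl⟩)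
        · exact Or.inl (Or.inl ⟨g, rfl⟩)
      | base h => exact Submonoid.subset_closure (Or.inr ⟨h, rfl⟩)
      | mul x y hx hy => exact mul_mem hx hy
  haveI : Small.{v} (PushoutI φ) := Countable.toSmall _
  set e : Shrink.{v} (PushoutI φ) ≃* PushoutI φ := Shrink.mulEquiv
  -- universal property gives a hom G →* PushoutI φ
  have hagree : ∀ (x : G) (hxA : x ∈ A) (hxB : x ∈ B), x ∈ C →
      (e.symm.toMonoidHom.comp (PushoutI.of (φ := φ) true)) ⟨x, hxA⟩ =
      (e.symm.toMonoidHom.comp (PushoutI.of (φ := φ) false)) ⟨x, hxB⟩ := by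
    intro x hxA hxB hxC
    simp only [MonoidHom.comp_apply]
    congr 1
    have h1 : (⟨x, hxA⟩ : A) = φ true ⟨x, hxC⟩ := rfl
    have h2 : (⟨x, hxB⟩ : B) = φ false ⟨x, hxC⟩ := rfl
    rw [h1, h2, PushoutI.of_apply_eq_base, PushoutI.of_apply_eq_base]
  obtain ⟨f, hfA, hfB⟩ := huniv _ _ hagree
  set F : G →* PushoutI φ := e.toMonoidHom.comp f with hFdef
  have hFA : ∀ (x : G) (hx : x ∈ A), F x = PushoutI.of (φ := φ) true ⟨x, hx⟩ := by
    intro x hx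
    show e (f x) = _
    rw [show f x = f ((⟨x, hx⟩ : A) : G) from rfl, hfA ⟨x, hx⟩]
    simp
  have hFB : ∀ (x : G) (hx : x ∈ B), F x = PushoutI.of (φ := φ) false ⟨x, hx⟩ := by
    intro x hx
    show e (f x) = _
    rw [show f x = f ((⟨x, hx⟩ : B) : G) from rfl, hfB ⟨x, hx⟩]
    simp
  -- build the reduced word
  intro hcmem
  set letter : Bool × G → (Σ b : Bool, (cond b A B : Subgroup G)) := fun pr =>
    if h : pr.2 ∈ (cond pr.1 A B : Subgroup G) then ⟨pr.1, ⟨pr.2, h⟩⟩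
    else ⟨pr.1, 1⟩ with hletter
  have hletter_fst : ∀ pr, (letter pr).1 = pr.1 := by
    intro pr; rw [hletter]; dsimp only; split <;> rfl
  have hletter_mem : ∀ pr, ∀ hpr : pr ∈ L, letter pr = ⟨pr.1, ⟨pr.2, (hmem pr hpr).1⟩⟩ := by
    intro pr hpr; rw [hletter]; dsimp only; rw [dif_pos (hmem pr hpr).1]
  have hfst : (L.map letter).map Sigma.fst = L.map Prod.fst := by
    rw [List.map_map]
    exact List.map_congr_left fun pr _ => hletter_fst pr
  set W : CoprodI.Word (fun b : Bool => (cond b A B : Subgroup G)) :=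
    { toList := L.map letter
      ne_one := by
        intro l hl
        obtain ⟨pr, hpr, rfl⟩ := List.mem_map.mp hl
        rw [hletter_mem pr hpr]
        intro h1
        exact (hmem pr hpr).2 (by
          have := congrArg Subtype.val h1
          simp only at this
          rw [this]
          exact one_mem C)
      chain_ne := by
        have := hfst ▸ hchain
        exact (List.isChain_map _).mp this } with hW
  have hred : PushoutI.Reduced φ W := by
    intro g hg
    obtain ⟨pr, hpr, rfl⟩ := List.mem_map.mp hg
    rw [hletter_mem pr hpr]
    rintro ⟨y, hy⟩
    apply (hmem pr hpr).2
    have h3 : (y : G) = pr.2 := congrArg Subtype.val hy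
    rw [← h3]
    exact y.2
  have hWprod : PushoutI.ofCoprodI W.prod = F ((L.map Prod.snd).prod) := by
    have h1 : W.prod = ((L.map letter).map
        (fun l : Σ b : Bool, ↥(cond b A B) => CoprodI.of (M := fun b : Bool => ↥(cond b A B)) l.2)).prod := rfl
    rw [h1, map_list_prod (PushoutI.ofCoprodI (φ := φ)), map_list_prod F,
      List.map_map, List.map_map, List.map_map]
    refine congrArg List.prod (List.map_congr_left ?_)
    rintro ⟨b, x⟩ hpr
    show PushoutI.ofCoprodI (CoprodI.of (M := fun b : Bool => ↥(cond b A B)) (letter (b, x)).2) = F x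
    rw [hletter_mem (b, x) hpr]
    cases b
    · dsimp only
      rw [PushoutI.ofCoprodI_of, hFB x (hmem (false, x) hpr).1]
    · dsimp only
      rw [PushoutI.ofCoprodI_of, hFA x (hmem (true, x) hpr).1]
  have hrange : PushoutI.ofCoprodI W.prod ∈ (PushoutI.base φ).range := by
    rw [hWprod]
    refine ⟨⟨(L.map Prod.snd).prod, hcmem⟩, ?_⟩
    rw [hFA _ (hCA hcmem)]
    exact (PushoutI.of_apply_eq_base φ true ⟨(L.map Prod.snd).prod, hcmem⟩).symm
  have hempty := PushoutI.Reduced.eq_empty_of_mem_range hφinj hred hrange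
  apply hne
  have hWnil : W.toList = [] := by rw [hempty]; rfl
  rw [hW] at hWnil
  simpa using hWnil

/-- **Assertion 2.2.** Let `γ ∈ A *_C B` have normal presentation
`γ = z₁ ⋯ z_k c` with `k ≥ 1`; here `c ∈ C` and the syllables `z i`
alternate between `A ∖ C` and `B ∖ C` (`side i = true` marks an `A`-syllable
and `side i = false` a `B`-syllable).  Then `‖γ‖ ≥ d(z_k c, C)`, where `‖·‖`
is the word norm of `A *_C B` with respect to `S_A ∪ S_B` and
`d(z_k c, C) = inf {d(z_k c, c'') : c'' ∈ C}`.  This holds for every choice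
of the sections `s_A` and `s_B`, i.e. for every alternating presentation. -/
theorem wordNorm_ge_dist_last_syllable {G : Type*} [Group G] (A B C : Subgroup G)
    (hG : IsAmalgamatedProduct G A B C)
    (SA SB : Set G) (hSAfin : SA.Finite) (hSBfin : SB.Finite)
    (hSAsymm : ∀ s ∈ SA, s⁻¹ ∈ SA) (hSBsymm : ∀ s ∈ SB, s⁻¹ ∈ SB)
    (hSAgen : Subgroup.closure SA = A) (hSBgen : Subgroup.closure SB = B)
    (k : ℕ) (hk : 1 ≤ k) (z : Fin k → G) (side : Fin k → Bool)
    (hA : ∀ i, side i = true → z i ∈ A) (hB : ∀ i, side i = false → z i ∈ B)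
    (hnotC : ∀ i, z i ∉ C)
    (halt : ∀ i j : Fin k, (j : ℕ) = (i : ℕ) + 1 → side j ≠ side i)
    (c : G) (hc : c ∈ C) (γ : G) (hγ : γ = (List.ofFn z).prod * c) :
    sInf ((fun c'' => wordNorm (SA ∪ SB) ((z ⟨k - 1, by omega⟩ * c)⁻¹ * c'')) ''
        (C : Set G)) ≤
      wordNorm (SA ∪ SB) γ := by
  classical
  obtain ⟨m, rfl⟩ : ∃ m, k = m + 1 := ⟨k - 1, by omega⟩
  have hCA := hG.1
  have hCB := hG.2.1
  have hSA_A : SA ⊆ (A : Set G) := by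
    rw [← hSAgen]; exact Subgroup.subset_closure
  have hSB_B : SB ⊆ (B : Set G) := by
    rw [← hSBgen]; exact Subgroup.subset_closure
  have hclos : Subgroup.closure (SA ∪ SB) = ⊤ := by
    rw [eq_top_iff, ← hG.2.2.1]
    refine (Subgroup.closure_le _).2 ?_
    rintro x (hx | hx)
    · have hAle : A ≤ Subgroup.closure (SA ∪ SB) := by
        rw [← hSAgen]; exact Subgroup.closure_mono Set.subset_union_left
      exact hAle hx
    · have hBle : B ≤ Subgroup.closure (SA ∪ SB) := by
        rw [← hSBgen]; exact Subgroup.closure_mono Set.subset_union_right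
      exact hBle hx
  have hSsymm : ∀ x ∈ SA ∪ SB, x⁻¹ ∈ SA ∪ SB := by
    rintro x (h | h)
    · exact Or.inl (hSAsymm x h)
    · exact Or.inr (hSBsymm x h)
  have hSinv' : (SA ∪ SB)⁻¹ = (SA ∪ SB : Set G) := by
    ext x
    rw [Set.mem_inv]
    constructor
    · intro hx
      have := hSsymm _ hx
      simpa using this
    · intro hx
      exact hSsymm x hx
  have hsubm : ∀ x : G, x ∈ Submonoid.closure (SA ∪ SB) := by
    intro x
    have hx : x ∈ (Subgroup.closure (SA ∪ SB)).toSubmonoid := by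
      rw [hclos]; trivial
    rw [Subgroup.closure_toSubmonoid, hSinv', Set.union_self] at hx
    exact hx
  haveI hcnt : Countable G :=
    countable_of_submonoid_closure ((hSAfin.union hSBfin).countable) hsubm
  -- the syllable list
  set li : Fin (m + 1) := Fin.last m with hlidef
  set L : List (Bool × G) := List.ofFn (fun i : Fin (m + 1) => (side i, z i)) with hLdef
  set D : List (Bool × G) := List.ofFn (fun i : Fin m => (side i.castSucc, z i.castSucc)) with hDdef
  have hsplit : L = D ++ [(side li, z li)] := by
    rw [hLdef, List.ofFn_succ', List.concat_eq_append, hDdef]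
  set p : G := (D.map Prod.snd).prod with hpdef
  have hLprod : (L.map Prod.snd).prod = p * z li := by
    rw [hsplit]; simp [hpdef]
  have hγ2 : γ = p * (z li * c) := by
    rw [hγ]
    have hofz : List.ofFn z = L.map Prod.snd := by
      rw [hLdef, List.map_ofFn]; rfl
    rw [hofz, hLprod, mul_assoc]
  have hmemL : ∀ pr ∈ L, pr.2 ∈ (cond pr.1 A B : Subgroup G) ∧ pr.2 ∉ C := by
    intro pr hpr
    rw [hLdef, List.mem_ofFn] at hpr
    obtain ⟨i, rfl⟩ := hpr
    refine ⟨?_, hnotC i⟩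
    rcases hb : side i with _ | _
    · show z i ∈ (cond false A B : Subgroup G)
      exact hB i hb
    · show z i ∈ (cond true A B : Subgroup G)
      exact hA i hb
  have hchainL : (L.map Prod.fst).Chain' Ne := by
    rw [hLdef, List.map_ofFn]
    unfold List.Chain'; rw [List.isChain_iff_getElem]
    intro i hi
    rw [List.getElem_ofFn, List.getElem_ofFn]
    simp only [List.length_ofFn] at hi
    exact Ne.symm (halt _ _ (by simp))
  -- the two regions
  set Pset : Set G := {g | ∃ c' ∈ (C : Set G), g = p * c'} with hPdef
  set Above : Set G := {g | ∃ M : List (Bool × G), ∃ c'' : G,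
      (∀ pr ∈ D ++ M, pr.2 ∈ (cond pr.1 A B : Subgroup G) ∧ pr.2 ∉ C) ∧
      ((D ++ M).map Prod.fst).Chain' Ne ∧ M ≠ [] ∧ c'' ∈ C ∧
      g = p * (M.map Prod.snd).prod * c''} with hAdef
  have hγAb : γ ∈ Above := by
    refine ⟨[(side li, z li)], c, ?_, ?_, by simp, hc, ?_⟩
    · rw [← hsplit]; exact hmemL
    · rw [← hsplit]; exact hchainL
    · rw [hγ2]; simp [mul_assoc]
  have h1Ab : (1 : G) ∉ Above := by
    rintro ⟨M, c'', hmem2, hchain2, hMne, hc''2, heq⟩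
    apply alt_prod_not_mem hG hcnt (D ++ M) hmem2 hchain2 (by simp [hMne])
    have h'' : p * (M.map Prod.snd).prod = c''⁻¹ :=
      eq_inv_of_mul_eq_one_left (by rw [← heq])
    rw [List.map_append, List.prod_append, ← hpdef, h'']
    exact inv_mem hc''2
  -- the step lemma
  have hstep : ∀ g s : G, g ∉ Above → g ∉ Pset → s ∈ (A : Set G) ∪ (B : Set G) →
      g * s ∉ Above := by
    rintro g s hgA hgP hs ⟨M, c'', hmem2, hchain2, hMne, hc''2, heq⟩
    have hgt : g = p * (M.map Prod.snd).prod * (c'' * s⁻¹) := by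
      have h0 : g = (g * s) * s⁻¹ := by group
      rw [h0, heq]; group
    set t := c'' * s⁻¹ with htdef
    have htAB : t ∈ (A : Set G) ∪ (B : Set G) := by
      rcases hs with h | h
      · exact Or.inl (mul_mem (hCA hc''2) (inv_mem h))
      · exact Or.inr (mul_mem (hCB hc''2) (inv_mem h))
    by_cases htC : t ∈ C
    · exact hgA ⟨M, t, hmem2, hchain2, hMne, htC, hgt⟩
    obtain ⟨e, hte⟩ : ∃ e : Bool, t ∈ (cond e A B : Subgroup G) := by
      rcases htAB with h | h
      · exact ⟨true, h⟩
      · exact ⟨false, h⟩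
    obtain ⟨M₁, du, hMc⟩ := M.eq_nil_or_concat.resolve_left hMne
    obtain ⟨d, u⟩ := du
    rw [List.concat_eq_append] at hMc
    subst hMc
    have hu := hmem2 (d, u) (by simp)
    have hM1prod : ((M₁ ++ [(d, u)]).map Prod.snd).prod = (M₁.map Prod.snd).prod * u := by simp
    by_cases hed : e = d
    · rw [hed] at hte
      have hut : u * t ∈ (cond d A B : Subgroup G) := mul_mem hu.1 hte
      by_cases hutC : u * t ∈ C
      · rcases eq_or_ne M₁ [] with hM1 | hM1
        · apply hgP
          refine ⟨u * t, hutC, ?_⟩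
          rw [hgt, hM1prod, hM1]
          simp [mul_assoc]
        · apply hgA
          refine ⟨M₁, u * t, ?_, ?_, hM1, hutC, ?_⟩
          · intro pr hpr
            apply hmem2
            simp only [List.mem_append] at hpr ⊢
            tauto
          · have hch := hchain2
            rw [show D ++ (M₁ ++ [(d, u)]) = (D ++ M₁) ++ [(d, u)] by simp,
              List.map_append] at hch
            exact (List.isChain_append.mp hch).1
          · rw [hgt, hM1prod]; group
      · apply hgA
        refine ⟨M₁ ++ [(d, u * t)], 1, ?_, ?_, by simp, one_mem C, ?_⟩
        · intro pr hpr
          rcases List.mem_append.mp hpr with h | h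
          · exact hmem2 pr (List.mem_append.mpr (Or.inl h))
          · rcases List.mem_append.mp h with h' | h'
            · exact hmem2 pr (by simp [h'])
            · have hpr' : pr = (d, u * t) := by simpa using h'
              subst hpr'
              exact ⟨hut, hutC⟩
        · have hfsteq : ((D ++ (M₁ ++ [(d, u * t)])).map Prod.fst) =
              ((D ++ (M₁ ++ [(d, u)])).map Prod.fst) := by simp
          rw [hfsteq]; exact hchain2
        · rw [hgt, hM1prod]
          simp only [List.map_append, List.prod_append, List.map_cons, List.map_nil,
            List.prod_cons, List.prod_nil]
          group
    · apply hgA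
      refine ⟨(M₁ ++ [(d, u)]) ++ [(e, t)], 1, ?_, ?_, by simp, one_mem C, ?_⟩
      · intro pr hpr
        have hpr2 : pr ∈ D ++ (M₁ ++ [(d, u)]) ∨ pr = (e, t) := by
          simp only [List.mem_append, List.mem_singleton] at hpr ⊢
          tauto
        rcases hpr2 with h | h
        · exact hmem2 pr h
        · subst h
          exact ⟨hte, htC⟩
      · rw [show D ++ ((M₁ ++ [(d, u)]) ++ [(e, t)]) = (D ++ (M₁ ++ [(d, u)])) ++ [(e, t)] by simp,
          List.map_append]
        refine List.isChain_append.mpr ⟨hchain2, by simp, ?_⟩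
        intro x hx y hy
        have hx' : d = x := by
          rw [show (D ++ (M₁ ++ [(d, u)])).map Prod.fst = ((D ++ M₁).map Prod.fst) ++ [d] by simp,
            List.getLast?_concat] at hx
          simpa using hx
        have hy' : e = y := by simpa using hy
        subst hx'; subst hy'
        exact fun h => hed h.symm
      · rw [hgt, hM1prod]
        simp only [List.map_append, List.prod_append, List.map_cons, List.map_nil,
          List.prod_cons, List.prod_nil]
        group
  -- the prefix lemma
  have hpref : ∀ w : List G, (∀ x ∈ w, x ∈ (A : Set G) ∪ (B : Set G)) →
      (w.prod ∈ Above ∨ w.prod ∈ Pset) → ∃ j, j ≤ w.length ∧ (w.take j).prod ∈ Pset := by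
    intro w
    induction w using List.reverseRecOn with
    | nil =>
      intro _ h
      refine ⟨0, Nat.zero_le _, ?_⟩
      have h1 : (1 : G) ∈ Pset := by
        rcases h with h | h
        · exact absurd (by simpa using h) h1Ab
        · simpa using h
      simpa using h1
    | append_singleton w' s ih =>
      intro hmemw h
      by_cases hP : (w' ++ [s]).prod ∈ Pset
      · exact ⟨(w' ++ [s]).length, le_rfl, by rw [List.take_length]; exact hP⟩
      · have hAb : (w' ++ [s]).prod ∈ Above := h.resolve_right hP
        by_cases hw' : w'.prod ∈ Above ∨ w'.prod ∈ Pset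
        · obtain ⟨j, hj, hPj⟩ := ih (fun x hx => hmemw x (by simp [hx])) hw'
          exact ⟨j, by simp only [List.length_append]; omega,
            by rwa [List.take_append_of_le_length hj]⟩
        · push_neg at hw'
          exfalso
          apply hstep w'.prod s hw'.1 hw'.2 (hmemw s (by simp))
          rw [List.prod_append] at hAb
          simpa using hAb
  -- a geodesic word for γ
  have hnonempty : {n : ℕ | ∃ l : List G, l.length = n ∧ (∀ x ∈ l, x ∈ SA ∪ SB) ∧
      l.prod = γ}.Nonempty := by
    obtain ⟨l, hl, hlp⟩ := Submonoid.exists_list_of_mem_closure (hsubm γ)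
    exact ⟨l.length, l, rfl, hl, hlp⟩
  obtain ⟨w, hwlen, hwmem, hwprod⟩ := Nat.sInf_mem hnonempty
  obtain ⟨j, hjle, hPj⟩ := hpref w
    (fun x hx => Set.union_subset_union hSA_A hSB_B (hwmem x hx)) (Or.inl (hwprod ▸ hγAb))
  obtain ⟨c', hc', hpc'⟩ := hPj
  have hdrop : (w.drop j).prod = c'⁻¹ * (z li * c) := by
    have h1 : (w.take j).prod * (w.drop j).prod = γ := by
      rw [← List.prod_append, List.take_append_drop, hwprod]
    rw [hpc'] at h1
    have h2 : (w.drop j).prod = (p * c')⁻¹ * γ := by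
      rw [← h1]; group
    rw [hγ2] at h2
    rw [h2]; group
  have hkey : (z li * c)⁻¹ * c' = ((w.drop j).map (fun x => x⁻¹)).reverse.prod := by
    rw [← List.prod_inv_reverse, hdrop]; group
  have hlistmem : ∀ x ∈ ((w.drop j).map (fun x => x⁻¹)).reverse, x ∈ SA ∪ SB := by
    intro x hx
    rw [List.mem_reverse, List.mem_map] at hx
    obtain ⟨y, hy, rfl⟩ := hx
    exact hSsymm y (hwmem y ((List.drop_subset j w) hy))
  have h2 : wordNorm (SA ∪ SB) ((z li * c)⁻¹ * c') ≤ wordNorm (SA ∪ SB) γ := by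
    have hle1 : wordNorm (SA ∪ SB) ((z li * c)⁻¹ * c') ≤
        ((w.drop j).map (fun x => x⁻¹)).reverse.length :=
      Nat.sInf_le ⟨_, rfl, hlistmem, hkey.symm⟩
    refine hle1.trans ?_
    have hlen : ((w.drop j).map (fun x => x⁻¹)).reverse.length ≤ w.length := by
      simp only [List.length_reverse, List.length_map, List.length_drop]
      omega
    refine hlen.trans ?_
    rw [hwlen]
    exact le_rfl
  refine le_trans (Nat.sInf_le ?_) h2
  exact ⟨c', hc', rfl⟩
end

section
/- Let Γ be the free product of finitely many copies of ℤ/2, i.e., the right-angled Coxeter group on a finite generating set S with m_{ss'} = ∞ for all s ≠ s' (equivalently, with zero-dimensional nerve). Then asdim Γ ≤ 1, where Γ carries the word metric with respect to S. -/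
/-- `AsdimLE d n` : the asymptotic dimension of the space `X` with distance
function `d` is at most `n`: for every `r > 0` there are `n + 1` families of
`r`-disjoint, uniformly bounded subsets of `X` which together cover `X`. -/
def AsdimLE {X : Type*} (d : X → X → ℝ) (n : ℕ) : Prop :=
  ∀ r : ℝ, 0 < r → ∃ (𝒰 : Fin (n + 1) → Set (Set X)) (D : ℝ),
    (∀ i, ∀ U ∈ 𝒰 i, ∀ V ∈ 𝒰 i, U ≠ V → ∀ x ∈ U, ∀ y ∈ V, r ≤ d x y) ∧
    (∀ i, ∀ U ∈ 𝒰 i, ∀ x ∈ U, ∀ y ∈ U, d x y ≤ D) ∧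
    (∀ x : X, ∃ i, ∃ U ∈ 𝒰 i, x ∈ U)

/-- The asymptotic dimension of the space `X` with distance function `d`,
as an extended natural number: the least `n` with `AsdimLE d n` (`⊤` if none). -/
noncomputable def asDim {X : Type*} (d : X → X → ℝ) : ℕ∞ :=
  sInf {N : ℕ∞ | ∃ n : ℕ, N = (n : ℕ∞) ∧ AsdimLE d n}

open List

namespace FPAux

variable {S : Type*} [DecidableEq S]

/-- Reduced words: lists with no two adjacent equal letters. -/
abbrev Red (S : Type*) := {l : List S // l.Chain' (· ≠ ·)}

/-- The action of a generator on reduced words. -/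
def stepF (s : S) (l : Red S) : Red S :=
  if h : l.val.head? = some s then ⟨l.val.tail, l.prop.tail⟩
  else ⟨s :: l.val, List.isChain_cons.mpr
    ⟨fun y hy hsy => h (by rw [hy, hsy]), l.prop⟩⟩

theorem stepF_involutive (s : S) : Function.Involutive (stepF s) := by
  rintro ⟨(_ | ⟨a, as⟩), hc⟩
  · simp [stepF]
  · by_cases has : a = s
    · subst has
      have h1 : stepF a ⟨a :: as, hc⟩ = ⟨as, hc.tail⟩ := by simp [stepF]
      rw [h1]
      have h2 : as.head? ≠ some a := by
        rcases as with _ | ⟨b, bs⟩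
        · simp
        · have h := (List.isChain_cons_cons.mp hc).1
          simp only [List.head?_cons]
          intro hba
          exact h (Option.some_injective _ hba).symm
      simp [stepF, h2]
    · apply Subtype.ext
      simp [stepF, has]

/-- The permutation of reduced words given by a generator. -/
def sigma (s : S) : Equiv.Perm (Red S) := (stepF_involutive s).toPerm

variable (M : CoxeterMatrix S) {W : Type*} [Group W] (cs : CoxeterSystem M W)

theorem liftable (hfree : ∀ s t : S, s ≠ t → M s t = 0) :
    CoxeterMatrix.IsLiftable M (sigma (S := S)) := by
  intro s t
  by_cases hst : s = t
  · subst hst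
    rw [M.diagonal, pow_one]
    exact Equiv.ext fun l => stepF_involutive s l
  · rw [hfree s t hst, pow_zero]

/-- The homomorphism from `W` to permutations of reduced words. -/
noncomputable def phi (hfree : ∀ s t : S, s ≠ t → M s t = 0) :
    W →* Equiv.Perm (Red S) :=
  cs.lift ⟨sigma, liftable M hfree⟩

variable (hfree : ∀ s t : S, s ≠ t → M s t = 0)

/-- The normal form of an element of `W`. -/
noncomputable def nf (w : W) : List S :=
  ((phi M cs hfree w) ⟨[], List.isChain_nil⟩).val

theorem nf_wordProd (l : List S) (hl : l.Chain' (· ≠ ·)) :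
    nf M cs hfree (cs.wordProd l) = l := by
  induction l with
  | nil => simp [nf, CoxeterSystem.wordProd_nil]
  | cons a l ih =>
    have hred : ((phi M cs hfree (cs.wordProd l)) ⟨[], List.isChain_nil⟩) =
        ⟨l, hl.tail⟩ := Subtype.ext (ih hl.tail)
    have hl' : l.head? ≠ some a := by
      intro h
      exact (List.isChain_cons.mp hl).1 a h rfl
    simp only [nf, CoxeterSystem.wordProd_cons, map_mul, Equiv.Perm.mul_apply, hred]
    have : phi M cs hfree (cs.simple a) = sigma a :=
      CoxeterSystem.lift_apply_simple _ _ _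
    rw [this]
    show (stepF a ⟨l, hl.tail⟩).val = a :: l
    simp [stepF, hl']

theorem exists_red (l : List S) :
    ∃ l' : List S, l'.Chain' (· ≠ ·) ∧ cs.wordProd l' = cs.wordProd l ∧
      l'.length ≤ l.length := by
  induction l with
  | nil => exact ⟨[], List.isChain_nil, rfl, le_refl _⟩
  | cons a l ih =>
    obtain ⟨l', h1, h2, h3⟩ := ih
    by_cases hh : l'.head? = some a
    · rcases l' with _ | ⟨b, bs⟩
      · simp at hh
      · have hb : b = a := by simpa using hh
        subst hb
        refine ⟨bs, h1.tail, ?_, ?_⟩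
        · rw [CoxeterSystem.wordProd_cons, ← h2, CoxeterSystem.wordProd_cons,
            cs.simple_mul_simple_cancel_left]
        · simp only [List.length_cons] at h3 ⊢
          omega
    · refine ⟨a :: l', List.isChain_cons.mpr
        ⟨fun y hy hay => hh (by rw [hy, hay]), h1⟩, ?_, by simpa using h3⟩
      rw [CoxeterSystem.wordProd_cons, CoxeterSystem.wordProd_cons, h2]

theorem nf_prod (w : W) : cs.wordProd (nf M cs hfree w) = w := by
  obtain ⟨l, rfl⟩ := cs.wordProd_surjective w
  obtain ⟨l', h1, h2, _⟩ := exists_red M cs l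
  rw [← h2, nf_wordProd M cs hfree l' h1]

theorem nf_chain' (w : W) : (nf M cs hfree w).Chain' (· ≠ ·) :=
  ((phi M cs hfree w) ⟨[], List.isChain_nil⟩).prop

theorem nf_min (w : W) (l : List S) (hl : cs.wordProd l = w) :
    (nf M cs hfree w).length ≤ l.length := by
  obtain ⟨l', h1, h2, h3⟩ := exists_red M cs l
  rw [← hl, ← h2, nf_wordProd M cs hfree l' h1]
  exact h3

end FPAux

namespace FPAux

variable {S : Type*} [DecidableEq S]

/-- Length of the longest common prefix. -/
def lcp : List S → List S → ℕ
  | a :: as, b :: bs => if a = b then lcp as bs + 1 else 0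
  | _, _ => 0

theorem lcp_le_left : ∀ u v : List S, lcp u v ≤ u.length
  | [], _ => by simp [lcp]
  | _ :: _, [] => by simp [lcp]
  | a :: as, b :: bs => by
    rw [lcp]
    split
    · simpa using lcp_le_left as bs
    · simp

theorem lcp_le_right : ∀ u v : List S, lcp u v ≤ v.length
  | [], _ => by simp [lcp]
  | _ :: _, [] => by simp [lcp]
  | a :: as, b :: bs => by
    rw [lcp]
    split
    · simpa using lcp_le_right as bs
    · simp

theorem lcp_take : ∀ u v : List S, u.take (lcp u v) = v.take (lcp u v)
  | [], v => by simp [lcp]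
  | _ :: _, [] => by simp [lcp]
  | a :: as, b :: bs => by
    rw [lcp]
    split
    · rename_i h
      subst h
      simp [lcp_take as bs]
    · simp

theorem lcp_head_ne : ∀ u v : List S, ∀ x ∈ (u.drop (lcp u v)).head?,
    ∀ y ∈ (v.drop (lcp u v)).head?, x ≠ y
  | [], v => by simp [lcp]
  | _ :: _, [] => by simp [lcp]
  | a :: as, b :: bs => by
    rw [lcp]
    split
    · simpa using lcp_head_ne as bs
    · rename_i h
      simpa using h

theorem le_lcp : ∀ (m : ℕ) (u v : List S), m ≤ u.length → u.take m = v.take m →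
    m ≤ lcp u v := by
  intro m
  induction m with
  | zero => simp
  | succ m ih =>
    rintro (_ | ⟨a, as⟩) (_ | ⟨b, bs⟩) hm ht
    · simp at hm
    · simp at hm
    · simp at ht
    · simp only [List.take_succ_cons, List.cons.injEq] at ht
      obtain ⟨rfl, ht⟩ := ht
      rw [lcp, if_pos rfl]
      exact Nat.succ_le_succ (ih as bs (by simpa using hm) ht)

variable (M : CoxeterMatrix S) {W : Type*} [Group W] (cs : CoxeterSystem M W)
variable (hfree : ∀ s t : S, s ≠ t → M s t = 0)

theorem nf_inv_mul (g h : W) :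
    nf M cs hfree (g⁻¹ * h) =
      ((nf M cs hfree g).drop (lcp (nf M cs hfree g) (nf M cs hfree h))).reverse ++
        (nf M cs hfree h).drop (lcp (nf M cs hfree g) (nf M cs hfree h)) := by
  set u := nf M cs hfree g with hu
  set v := nf M cs hfree h with hv
  set c := lcp u v with hc
  have hchain : (((u.drop c).reverse) ++ v.drop c).Chain' (· ≠ ·) := by
    show List.IsChain _ _
    rw [List.isChain_append]
    refine ⟨List.isChain_reverse.mpr (((nf_chain' M cs hfree g).drop c).imp
      fun a b hab => Ne.symm hab), (nf_chain' M cs hfree h).drop c, ?_⟩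
    intro x hx y hy
    rw [List.getLast?_reverse] at hx
    exact lcp_head_ne u v x hx y hy
  have hprod : cs.wordProd ((u.drop c).reverse ++ v.drop c) = g⁻¹ * h := by
    rw [CoxeterSystem.wordProd_append, CoxeterSystem.wordProd_reverse]
    have hg : cs.wordProd (u.take c) * cs.wordProd (u.drop c) = g := by
      rw [← CoxeterSystem.wordProd_append, List.take_append_drop]
      exact nf_prod M cs hfree g
    have hh : cs.wordProd (v.take c) * cs.wordProd (v.drop c) = h := by
      rw [← CoxeterSystem.wordProd_append, List.take_append_drop]
      exact nf_prod M cs hfree h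
    rw [← hg, ← hh, lcp_take u v, ← hc]
    group
  rw [← hprod, nf_wordProd M cs hfree _ hchain]

theorem nf_inv_mul_length (g h : W) :
    (nf M cs hfree (g⁻¹ * h)).length =
      ((nf M cs hfree g).length - lcp (nf M cs hfree g) (nf M cs hfree h)) +
      ((nf M cs hfree h).length - lcp (nf M cs hfree g) (nf M cs hfree h)) := by
  rw [nf_inv_mul M cs hfree g h]
  simp [List.length_append, List.length_reverse, List.length_drop]

end FPAux

namespace FPAux

variable {S : Type*} [DecidableEq S]
variable (M : CoxeterMatrix S) {W : Type*} [Group W] (cs : CoxeterSystem M W)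
variable (hfree : ∀ s t : S, s ≠ t → M s t = 0)

theorem exists_map_eq {L : List W} (hL : ∀ x ∈ L, x ∈ Set.range cs.simple) :
    ∃ l : List S, List.map cs.simple l = L := by
  induction L with
  | nil => exact ⟨[], rfl⟩
  | cons a L ih =>
    obtain ⟨l, hl⟩ := ih fun x hx => hL x (List.mem_cons_of_mem _ hx)
    obtain ⟨s, hs⟩ := hL a (List.mem_cons_self)
    exact ⟨s :: l, by rw [List.map_cons, hl, hs]⟩

theorem wordNorm_eq (w : W) :
    wordNorm (Set.range cs.simple) w = (nf M cs hfree w).length := by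
  have hmem : (nf M cs hfree w).length ∈ {k | ∃ l : List W, l.length = k ∧
      (∀ x ∈ l, x ∈ Set.range cs.simple) ∧ l.prod = w} :=
    ⟨List.map cs.simple (nf M cs hfree w), by simp,
      fun x hx => by obtain ⟨s, _, rfl⟩ := List.mem_map.mp hx; exact ⟨s, rfl⟩,
      nf_prod M cs hfree w⟩
  refine Nat.le_antisymm (Nat.sInf_le hmem) (le_csInf ⟨_, hmem⟩ ?_)
  rintro k ⟨L, rfl, hLmem, hLprod⟩
  obtain ⟨l, rfl⟩ := exists_map_eq M cs hLmem
  rw [List.length_map]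
  exact nf_min M cs hfree w l hLprod

end FPAux

/-- If `Γ` is the free product of finitely many copies of `ℤ/2`, i.e. the
right-angled Coxeter group on a finite generating set `S` with
`m_{s s'} = ∞` for all `s ≠ s'` (in Mathlib's convention, `M s s' = 0`
encodes `m_{s s'} = ∞`; equivalently, the nerve is zero-dimensional), then
`asdim Γ ≤ 1`, where `Γ` carries the word metric with respect to the set of
simple reflections. -/
theorem asdim_free_product_of_order_two_le_one {S : Type*} [Finite S]
    (M : CoxeterMatrix S) {W : Type*} [Group W] (cs : CoxeterSystem M W)
    (hfree : ∀ s t : S, s ≠ t → M s t = 0) :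
    asDim (fun g h : W => wordDist (Set.range cs.simple) g h) ≤ 1 := by
  letI : DecidableEq S := Classical.decEq S
  set nfF : W → List S := FPAux.nf M cs hfree with hnfF
  set n : W → ℕ := fun w => (nfF w).length with hn
  have hdist : ∀ g h : W, wordDist (Set.range cs.simple) g h =
      (((n g - FPAux.lcp (nfF g) (nfF h)) +
        (n h - FPAux.lcp (nfF g) (nfF h)) : ℕ) : ℝ) := by
    intro g h
    simp only [wordDist, hn, hnfF]
    norm_cast
    rw [FPAux.wordNorm_eq M cs hfree, FPAux.nf_inv_mul_length M cs hfree]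
  have hA : AsdimLE (fun g h : W => wordDist (Set.range cs.simple) g h) 1 := by
    intro r hr
    set k : ℕ := ⌈r⌉₊ with hk
    have hk1 : 1 ≤ k := Nat.ceil_pos.mpr hr
    have hrk : r ≤ (k : ℝ) := Nat.le_ceil r
    set m : ℕ → ℕ := fun j => if j = 0 then 0 else (j - 1) * k + 1 with hm
    set P : ℕ → List S → Set W :=
      fun j p => {g | n g / k = j ∧ (nfF g).take (m j) = p} with hP
    refine ⟨fun i => {U | ∃ j p, j % 2 = i.val ∧ U = P j p}, 4 * k, ?_, ?_, ?_⟩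
    · -- r-disjointness
      rintro i U ⟨j, p, hjpar, rfl⟩ V ⟨j', p', hj'par, rfl⟩ hUV x hx y hy
      obtain ⟨hx1, hx2⟩ := hx
      obtain ⟨hy1, hy2⟩ := hy
      set c := FPAux.lcp (nfF x) (nfF y) with hc
      have hcx : c ≤ n x := FPAux.lcp_le_left _ _
      have hcy : c ≤ n y := FPAux.lcp_le_right _ _
      have ex := Nat.div_add_mod (n x) k
      have ey := Nat.div_add_mod (n y) k
      rw [hx1] at ex
      rw [hy1] at ey
      have emx : n x % k < k := Nat.mod_lt _ (by omega)
      have emy : n y % k < k := Nat.mod_lt _ (by omega)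
      show r ≤ wordDist (Set.range cs.simple) x y
      rw [hdist x y, ← hc]
      by_cases hjj : j = j'
      · subst hjj
        -- the prefixes must differ
        have hne : (nfF x).take (m j) ≠ (nfF y).take (m j) := by
          intro hEq
          exact hUV (by rw [← hx2, ← hy2, hEq])
        have hj1 : j ≠ 0 := by
          intro h0
          apply hne
          rw [h0]
          simp [hm]
        obtain ⟨jj, rfl⟩ : ∃ jj, j = jj + 1 := ⟨j - 1, by omega⟩
        have hmj : m (jj + 1) = jj * k + 1 := by simp [hm]
        -- c < m j
        have hcm : c < m (jj + 1) := by
          by_contra h'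
          push_neg at h'
          apply hne
          have h1 : (nfF x).take (m (jj + 1)) = ((nfF x).take c).take (m (jj + 1)) := by
            rw [List.take_take, min_eq_left h']
          have h2 : (nfF y).take (m (jj + 1)) = ((nfF y).take c).take (m (jj + 1)) := by
            rw [List.take_take, min_eq_left h']
          rw [h1, h2, hc, FPAux.lcp_take]
        rw [hmj] at hcm
        have hmul : k * (jj + 1) = jj * k + k := by ring
        have hgoal : k ≤ (n x - c) + (n y - c) := by omega
        calc r ≤ (k : ℝ) := hrk
          _ ≤ _ := Nat.cast_le.mpr hgoal
      · -- different annuli of same parity: |j - j'| ≥ 2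
        have hpar : j % 2 = j' % 2 := by rw [hjpar, hj'par]
        have hsep : j + 2 ≤ j' ∨ j' + 2 ≤ j := by omega
        have hgoal : k ≤ (n x - c) + (n y - c) := by
          rcases hsep with h | h
          · have h1 : k * (j + 2) ≤ k * j' := Nat.mul_le_mul_left k h
            have h2 : k * (j + 2) = k * j + 2 * k := by ring
            omega
          · have h1 : k * (j' + 2) ≤ k * j := Nat.mul_le_mul_left k h
            have h2 : k * (j' + 2) = k * j' + 2 * k := by ring
            omega
        calc r ≤ (k : ℝ) := hrk
          _ ≤ _ := Nat.cast_le.mpr hgoal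
    · -- uniform boundedness
      rintro i U ⟨j, p, hjpar, rfl⟩ x hx y hy
      obtain ⟨hx1, hx2⟩ := hx
      obtain ⟨hy1, hy2⟩ := hy
      set c := FPAux.lcp (nfF x) (nfF y) with hc
      have hcx : c ≤ n x := FPAux.lcp_le_left _ _
      have hcy : c ≤ n y := FPAux.lcp_le_right _ _
      have ex := Nat.div_add_mod (n x) k
      have ey := Nat.div_add_mod (n y) k
      rw [hx1] at ex
      rw [hy1] at ey
      have emx : n x % k < k := Nat.mod_lt _ (by omega)
      have emy : n y % k < k := Nat.mod_lt _ (by omega)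
      show wordDist (Set.range cs.simple) x y ≤ 4 * (k : ℝ)
      rw [hdist x y, ← hc]
      have hgoal : (n x - c) + (n y - c) ≤ 4 * k := by
        by_cases hj0 : j = 0
        · subst hj0
          omega
        · obtain ⟨jj, rfl⟩ : ∃ jj, j = jj + 1 := ⟨j - 1, by omega⟩
          have hmj : m (jj + 1) = jj * k + 1 := by simp [hm]
          have hmul : k * (jj + 1) = jj * k + k := by ring
          have hmx : m (jj + 1) ≤ n x := by omega
          have hcm : m (jj + 1) ≤ c :=
            FPAux.le_lcp _ _ _ hmx (by rw [hx2, hy2])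
          omega
      calc ((((n x - c) + (n y - c) : ℕ)) : ℝ) ≤ ((4 * k : ℕ) : ℝ) :=
            Nat.cast_le.mpr hgoal
        _ = 4 * (k : ℝ) := by push_cast; ring
    · -- covering
      intro x
      refine ⟨⟨(n x / k) % 2, by omega⟩, P (n x / k) ((nfF x).take (m (n x / k))),
        ⟨n x / k, (nfF x).take (m (n x / k)), rfl, rfl⟩, rfl, rfl⟩
  exact sInf_le ⟨1, Nat.cast_one.symm, hA⟩
end
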